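/- For every ζ ∈ (0, 1/6) the following strict inequality holds: -(4π/3)·sin(πζ) - 2·cos(π(ζ + 1/3))·[ log(2·cos(π(ζ + 1/3)))/(3ζ) + √3·π/3 ] < 0. -/

import Mathlib

/-- For every `ζ ∈ (0, 1/6)`:
`-(4π/3)·sin(πζ) - 2·cos(π(ζ+1/3))·[log(2·cos(π(ζ+1/3)))/(3ζ) + √3·π/3] < 0`. -/
theorem flux_constant_expression_neg
    (ζ : ℝ) (hζ : ζ ∈ Set.Ioo (0 : ℝ) (1/6)) :
    -(4 * Real.pi / 3) * Real.sin (Real.pi * ζ) -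
      2 * Real.cos (Real.pi * (ζ + 1/3)) *
        (Real.log (2 * Real.cos (Real.pi * (ζ + 1/3))) / (3 * ζ) +
          Real.sqrt 3 * Real.pi / 3) < 0 := by
  obtain ⟨hζ0, hζ6⟩ := hζ
  have hπ := Real.pi_pos
  set f : ℝ → ℝ := fun x => Real.log (2 * Real.cos (Real.pi * (x + 1/3))) with hf
  set f' : ℝ → ℝ := fun x => -Real.pi * Real.tan (Real.pi * (x + 1/3)) with hf'
  have hcospos : ∀ x ∈ Set.Icc (0:ℝ) ζ, 0 < Real.cos (Real.pi * (x + 1/3)) := by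
    intro x hx
    apply Real.cos_pos_of_mem_Ioo
    constructor
    · nlinarith [hx.1]
    · nlinarith [hx.2]
  have hderiv : ∀ x ∈ Set.Icc (0:ℝ) ζ, HasDerivAt f (f' x) x := by
    intro x hx
    have hcx := hcospos x hx
    have h1 : HasDerivAt (fun y : ℝ => Real.pi * (y + 1/3)) Real.pi x := by
      simpa using ((hasDerivAt_id x).add_const (1/3 : ℝ)).const_mul Real.pi
    have h2 : HasDerivAt (fun y : ℝ => Real.cos (Real.pi * (y + 1/3)))
        (-Real.sin (Real.pi * (x + 1/3)) * Real.pi) x :=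
      (Real.hasDerivAt_cos _).comp x h1
    have h3 : HasDerivAt (fun y : ℝ => 2 * Real.cos (Real.pi * (y + 1/3)))
        (2 * (-Real.sin (Real.pi * (x + 1/3)) * Real.pi)) x := h2.const_mul 2
    have hne : 2 * Real.cos (Real.pi * (x + 1/3)) ≠ 0 := by positivity
    have h4 := h3.log hne
    have h5 : (2 * (-Real.sin (Real.pi * (x + 1/3)) * Real.pi)) /
        (2 * Real.cos (Real.pi * (x + 1/3))) = f' x := by
      show _ = -Real.pi * Real.tan (Real.pi * (x + 1/3))
      rw [Real.tan_eq_sin_div_cos]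
      field_simp
    exact h5 ▸ h4
  have hcont : ContinuousOn f (Set.Icc 0 ζ) :=
    fun x hx => (hderiv x hx).continuousAt.continuousWithinAt
  obtain ⟨ξ, hξ, hslope⟩ := exists_hasDerivAt_eq_slope f f' hζ0 hcont
    (fun x hx => hderiv x (Set.mem_Icc_of_Ioo hx))
  have hθc : 0 < Real.cos (Real.pi * (ζ + 1/3)) :=
    hcospos ζ ⟨le_of_lt hζ0, le_refl ζ⟩
  have hf0 : f 0 = 0 := by
    show Real.log (2 * Real.cos (Real.pi * (0 + 1/3))) = 0
    have h13 : Real.pi * ((0:ℝ) + 1/3) = Real.pi / 3 := by ring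
    rw [h13, Real.cos_pi_div_three]
    norm_num
  have htan : Real.tan (Real.pi * (ξ + 1/3)) < Real.tan (Real.pi * (ζ + 1/3)) := by
    apply Real.tan_lt_tan_of_nonneg_of_lt_pi_div_two
    · nlinarith [hξ.1]
    · nlinarith [mul_pos hπ (show (0:ℝ) < 1/6 - ζ by linarith)]
    · exact mul_lt_mul_of_pos_left (by linarith [hξ.2] : ξ + 1/3 < ζ + 1/3) hπ
  have hfval : f ζ = ζ * f' ξ := by
    rw [hslope, hf0]
    field_simp
    ring
  have key : f ζ > -Real.pi * ζ * Real.tan (Real.pi * (ζ + 1/3)) := by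
    rw [hfval]
    have h5 : f' ξ = -Real.pi * Real.tan (Real.pi * (ξ + 1/3)) := rfl
    rw [h5]
    nlinarith [mul_pos (mul_pos hπ hζ0) (sub_pos.mpr htan)]
  have key2 : Real.cos (Real.pi * (ζ + 1/3)) * f ζ >
      -(Real.pi * ζ * Real.sin (Real.pi * (ζ + 1/3))) := by
    have h1 := mul_lt_mul_of_pos_left key hθc
    have hts : Real.tan (Real.pi * (ζ + 1/3)) * Real.cos (Real.pi * (ζ + 1/3))
        = Real.sin (Real.pi * (ζ + 1/3)) := Real.tan_mul_cos hθc.ne'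
    have h2 : Real.cos (Real.pi * (ζ + 1/3)) *
        (-Real.pi * ζ * Real.tan (Real.pi * (ζ + 1/3))) =
        -(Real.pi * ζ * Real.sin (Real.pi * (ζ + 1/3))) := by
      rw [← hts]; ring
    linarith [h1, h2]
  have hsin : Real.sin (Real.pi * ζ) =
      Real.sin (Real.pi * (ζ + 1/3)) / 2 -
        Real.sqrt 3 / 2 * Real.cos (Real.pi * (ζ + 1/3)) := by
    have h : Real.pi * ζ = Real.pi * (ζ + 1/3) - Real.pi / 3 := by ring
    rw [h, Real.sin_sub, Real.cos_pi_div_three, Real.sin_pi_div_three]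
    ring
  have heq : -(4 * Real.pi / 3) * Real.sin (Real.pi * ζ) -
      2 * Real.cos (Real.pi * (ζ + 1/3)) *
        (Real.log (2 * Real.cos (Real.pi * (ζ + 1/3))) / (3 * ζ) +
          Real.sqrt 3 * Real.pi / 3) =
      (-(2 * Real.pi * ζ * Real.sin (Real.pi * (ζ + 1/3))) -
        2 * Real.cos (Real.pi * (ζ + 1/3)) * f ζ) / (3 * ζ) := by
    have hfζ : f ζ = Real.log (2 * Real.cos (Real.pi * (ζ + 1/3))) := rfl
    rw [hsin, hfζ]
    field_simp
    ring
  rw [heq]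
  apply div_neg_of_neg_of_pos
  · linarith
  · positivity
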